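/- Let (D,⊢,⊣,∘) be a di-skew brace with a fixed bar-unit 0 ∈ E(D). Then for all a ∈ D one has g_{m_a} = g_a and m_{g_a} = m_a, where a = g_a ⊢ e_a is the additive decomposition and a = m_a ∘ u_a is the multiplicative decomposition of a. -/
import Mathlib


/-- An element `e` is a *bar-unit* for the pair of operations `(⊢, ⊣)` if
`e ⊢ a = a = a ⊣ e` for all `a`. -/
def IsBarUnit {D : Type*} (vd dv : D → D → D) (e : D) : Prop :=
  ∀ a : D, vd e a = a ∧ dv a e = a

/-- A generalized digroup (g-digroup): two associative operations `vd` (`⊢`) and `dv` (`⊣`)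
satisfying inner associativity and the two bar-side irrelevance laws, admitting at least one
bar-unit, and such that for every element `a` and every bar-unit `e` there is a unique pair
`(I e a, J e a)` with `(I e a) ⊣ a = e = a ⊢ (J e a)`. -/
structure GDigroup (D : Type*) where
  vd : D → D → D
  dv : D → D → D
  vd_assoc : ∀ a b c : D, vd (vd a b) c = vd a (vd b c)
  dv_assoc : ∀ a b c : D, dv (dv a b) c = dv a (dv b c)
  inner_assoc : ∀ a b c : D, dv (vd a b) c = vd a (dv b c)
  bar_right : ∀ a b c : D, dv a (vd b c) = dv a (dv b c)
  bar_left : ∀ a b c : D, vd (vd a b) c = vd (dv a b) c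
  exists_barUnit : ∃ e : D, IsBarUnit vd dv e
  I : D → D → D
  J : D → D → D
  I_spec : ∀ e a : D, IsBarUnit vd dv e → dv (I e a) a = e
  J_spec : ∀ e a : D, IsBarUnit vd dv e → vd a (J e a) = e
  I_unique : ∀ e a x : D, IsBarUnit vd dv e → dv x a = e → x = I e a
  J_unique : ∀ e a y : D, IsBarUnit vd dv e → vd a y = e → y = J e a
/-- A (left) di-skew brace: the additive structure `(D, ⊢, ⊣)` is a g-digroup, the
multiplicative structure `(D, ∘)` is a right group (an associative operation such that for
all `a b` there is a unique `x` with `a ∘ x = b`), and the compatibility laws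
`a ∘ (b ⊢ c) = a ∘ b ⊢ a⁻¹ ⊢ a ∘ c`, `a ∘ (b ⊣ c) = a ∘ b ⊣ a⁻¹ ⊣ a ∘ c` and
`(a ⊢ b) ∘ c = (a ⊣ b) ∘ c` hold, where `a⁻¹ ⊢ x` means `(I e a) ⊢ x` and `x ⊣ a⁻¹` means
`x ⊣ (J e a)` for any bar-unit `e`. -/
structure DiSkewBrace (D : Type*) extends GDigroup D where
  circ : D → D → D
  circ_assoc : ∀ a b c : D, circ (circ a b) c = circ a (circ b c)
  circ_rightGroup : ∀ a b : D, ∃! x : D, circ a x = b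
  d1 : ∀ e : D, IsBarUnit vd dv e →
    ∀ a b c : D, circ a (vd b c) = vd (circ a b) (vd (I e a) (circ a c))
  d2 : ∀ e : D, IsBarUnit vd dv e →
    ∀ a b c : D, circ a (dv b c) = dv (dv (circ a b) (J e a)) (circ a c)
  d3 : ∀ a b c : D, circ (vd a b) c = circ (dv a b) c

/-- Let `(D, ⊢, ⊣, ∘)` be a di-skew brace with a fixed bar-unit `z`.
Let `a = g_a ⊢ e_a` be the additive decomposition (with `g_a ∈ G = D ⊢ z` and `e_a` a
bar-unit) and `a = m_a ∘ u_a` the multiplicative decomposition (with `m_a ∈ M = D ∘ z` and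
`u_a` an idempotent/bar-unit).  Then `g_{m_a} = g_a` and `m_{g_a} = m_a` for all `a`. -/
theorem diSkewBrace_decomposition_compat {D : Type*} (S : DiSkewBrace D)
    (z : D) (hz : IsBarUnit S.vd S.dv z)
    (g ea m u : D → D)
    (hgG : ∀ a : D, ∃ x : D, g a = S.vd x z)
    (heaE : ∀ a : D, IsBarUnit S.vd S.dv (ea a))
    (hadd : ∀ a : D, S.vd (g a) (ea a) = a)
    (hmM : ∀ a : D, ∃ x : D, m a = S.circ x z)
    (huE : ∀ a : D, IsBarUnit S.vd S.dv (u a))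
    (hmul : ∀ a : D, S.circ (m a) (u a) = a) :
    ∀ a : D, g (m a) = g a ∧ m (g a) = m a := by
  have hz1 : ∀ x, S.vd z x = x := fun x => (hz x).1
  have hz2 : ∀ x, S.dv x z = x := fun x => (hz x).2
  -- left cancellation by `t` via `I z t`
  have cancel : ∀ t x, S.vd (S.I z t) (S.vd t x) = x := by
    intro t x
    rw [← S.vd_assoc, S.bar_left, S.I_spec z t hz, hz1]
  -- `I z b` and `J z b` act the same on the left
  have IJ : ∀ b x, S.vd (S.I z b) x = S.vd (S.J z b) x := by
    intro b x
    have h1 : S.vd b (S.vd (S.J z b) x) = x := by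
      rw [← S.vd_assoc, S.J_spec z b hz, hz1]
    calc S.vd (S.I z b) x = S.vd (S.I z b) (S.vd b (S.vd (S.J z b) x)) := by rw [h1]
      _ = S.vd (S.J z b) x := cancel b _
  -- every element absorbs its own additive bar-unit on the right
  have tea : ∀ t, S.vd t (ea t) = t := by
    intro t
    have h : S.vd (S.vd (g t) (ea t)) (ea t) = S.vd (g t) (ea t) := by
      rw [S.vd_assoc, (heaE t (ea t)).1]
    rwa [hadd t] at h
  -- from d1 with b = c = z
  have d1z : ∀ b, S.circ b z = S.vd (S.circ b z) (S.vd (S.I z b) (S.circ b z)) := by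
    intro b
    have h := S.d1 z hz b z z
    rwa [hz1 z] at h
  have sEq : ∀ b, S.vd (S.I z b) (S.circ b z) = ea (S.circ b z) := by
    intro b
    have h1 : S.vd (S.I z (S.circ b z))
        (S.vd (S.circ b z) (S.vd (S.I z b) (S.circ b z)))
        = S.vd (S.I z b) (S.circ b z) := cancel _ _
    have h2 : S.vd (S.I z (S.circ b z)) (S.vd (S.circ b z) (ea (S.circ b z)))
        = ea (S.circ b z) := cancel _ _
    rw [← d1z b] at h1
    rw [tea (S.circ b z)] at h2
    exact h1.symm.trans h2
  have tEq : ∀ b, S.circ b z = S.vd b (S.vd (S.I z b) (S.circ b z)) := by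
    intro b
    rw [IJ b, ← S.vd_assoc, S.J_spec z b hz, hz1]
  have L2 : ∀ b, S.vd (S.circ b z) z = S.vd b z := by
    intro b
    conv_lhs => rw [tEq b]
    rw [S.vd_assoc, sEq b, (heaE (S.circ b z) z).1]
  have gEq : ∀ b, g b = S.vd b z := by
    intro b
    obtain ⟨x, hx⟩ := hgG b
    conv_rhs => rw [← hadd b]
    rw [S.vd_assoc, (heaE b z).1, hx, S.vd_assoc, hz1]
  -- multiplicative side
  have eCirc : ∀ e, IsBarUnit S.vd S.dv e → ∀ c, S.circ e c = S.circ z c := by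
    intro e he c
    calc S.circ e c = S.circ (S.vd z e) c := by rw [(hz e).1]
      _ = S.circ (S.dv z e) c := S.d3 z e c
      _ = S.circ z c := by rw [(he z).2]
  have Izz : S.I z z = z := (S.I_unique z z z hz ((hz z).2)).symm
  have zzE : IsBarUnit S.vd S.dv (S.circ z z) := by
    have h := sEq z
    rw [Izz, hz1] at h
    rw [h]
    exact heaE _
  have zid : ∀ c, S.circ z c = c := by
    intro c
    have h1 : S.circ (S.circ z z) c = S.circ z c := eCirc _ zzE c
    rw [S.circ_assoc] at h1
    obtain ⟨x, -, hu⟩ := S.circ_rightGroup z (S.circ z c)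
    exact (hu (S.circ z c) h1).trans (hu c rfl).symm
  have mEq : ∀ b, m b = S.circ b z := by
    intro b
    obtain ⟨x, hx⟩ := hmM b
    have h1 : S.circ (u b) z = z := (eCirc (u b) (huE b) z).trans (zid z)
    conv_rhs => rw [← hmul b]
    rw [S.circ_assoc, h1, hx, S.circ_assoc, zid]
  intro a
  constructor
  · rw [gEq (m a), mEq a, L2 a, gEq a]
  · rw [mEq (g a), gEq a, S.d3, hz2 a, mEq a]
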